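/- In any tree, the number of non-leaf vertices is at most twice the size of a maximum matching. -/

import Mathlib

open SimpleGraph

lemma aux_head_edge {V : Type*} {G : SimpleGraph V} {u v x u' : V} (h : G.Adj u u')
    (q : G.Walk u' v) (hp : (SimpleGraph.Walk.cons h q).IsPath)
    (hx : s(u, x) ∈ (SimpleGraph.Walk.cons h q).edges) : x = u' := by
  rw [SimpleGraph.Walk.edges_cons, List.mem_cons] at hx
  rcases hx with hx | hx
  · rcases Sym2.eq_iff.mp hx with ⟨-, h2⟩ | ⟨h1, h2⟩
    · exact h2
    · exact absurd (h1 ▸ h) (G.irrefl)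
  · exact absurd (SimpleGraph.Walk.fst_mem_support_of_mem_edges q hx)
      ((SimpleGraph.Walk.cons_isPath_iff h q).mp hp).2

lemma aux_exists_low_degree {V : Type*} [Fintype V] [Nonempty V] (G : SimpleGraph V)
    [DecidableRel G.Adj] (hac : G.IsAcyclic) : ∃ l, G.degree l ≤ 1 := by
  classical
  by_contra hdeg
  push_neg at hdeg
  -- every n is the length of some path
  have key : ∀ n : ℕ, ∃ (u v : V) (p : G.Walk u v), p.IsPath ∧ p.length = n := by
    intro n
    induction n with
    | zero =>
      obtain ⟨u⟩ := ‹Nonempty V›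
      exact ⟨u, u, SimpleGraph.Walk.nil, SimpleGraph.Walk.IsPath.nil, rfl⟩
    | succ n ih =>
      obtain ⟨u, v, p, hp, hlen⟩ := ih
      -- extend the path p at its head u
      cases p with
      | nil =>
        -- n = 0; pick any neighbor of u
        have h1 : 0 < (G.neighborFinset u).card := by
          have h2 : 1 < (G.neighborFinset u).card := hdeg u
          omega
        obtain ⟨x, hx⟩ := Finset.card_pos.mp h1
        rw [SimpleGraph.mem_neighborFinset] at hx
        refine ⟨x, u, SimpleGraph.Walk.cons hx.symm SimpleGraph.Walk.nil, ?_, ?_⟩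
        · rw [SimpleGraph.Walk.cons_isPath_iff]
          refine ⟨SimpleGraph.Walk.IsPath.nil, ?_⟩
          simp [hx.ne']
        · simp at hlen ⊢; omega
      | @cons _ u' _ h q =>
        -- pick a neighbor x of u distinct from u'
        have h1 : 1 < (G.neighborFinset u).card := hdeg u
        have hu' : u' ∈ G.neighborFinset u := (SimpleGraph.mem_neighborFinset ..).mpr h
        obtain ⟨x, hx, hxne⟩ : ∃ x ∈ G.neighborFinset u, x ≠ u' := by
          by_contra hcon
          push_neg at hcon
          have : G.neighborFinset u ⊆ {u'} := fun y hy => Finset.mem_singleton.mpr (hcon y hy)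
          have := Finset.card_le_card this
          simp only [Finset.card_singleton] at this; omega
        rw [SimpleGraph.mem_neighborFinset] at hx
        by_cases hmem : x ∈ (SimpleGraph.Walk.cons h q).support
        · -- build a cycle, contradiction
          exfalso
          set p := SimpleGraph.Walk.cons h q with hpdef
          have hq' : (p.takeUntil x hmem).IsPath := hp.takeUntil hmem
          have hedge : s(x, u) ∉ (p.takeUntil x hmem).edges := by
            intro hin
            have hin' : s(u, x) ∈ p.edges :=
              SimpleGraph.Walk.edges_takeUntil_subset p hmem (Sym2.eq_swap ▸ hin)
            exact hxne (aux_head_edge h q hp hin')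
          have hcyc : (SimpleGraph.Walk.cons hx.symm (p.takeUntil x hmem)).IsCycle := by
            rw [SimpleGraph.Walk.cons_isCycle_iff]
            exact ⟨hq', hedge⟩
          exact hac _ hcyc
        · refine ⟨x, v, SimpleGraph.Walk.cons hx.symm (SimpleGraph.Walk.cons h q), ?_, ?_⟩
          · rw [SimpleGraph.Walk.cons_isPath_iff]
            exact ⟨hp, hmem⟩
          · simp at hlen ⊢; omega
  obtain ⟨u, v, p, hp, hlen⟩ := key (Fintype.card V)
  exact absurd (hp.length_lt) (by omega)

universe u

lemma aux_matching_cover : ∀ (n : ℕ) (V : Type u) [Fintype V] (G : SimpleGraph V)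
    [DecidableRel G.Adj], Fintype.card V ≤ n → G.IsAcyclic →
    ∃ M : G.Subgraph, M.IsMatching ∧ ∀ v, 2 ≤ G.degree v → v ∈ M.verts := by
  intro n
  induction n with
  | zero =>
    intro V _ G _ hcard _
    have : IsEmpty V := Fintype.card_eq_zero_iff.mp (Nat.le_zero.mp hcard)
    refine ⟨⊥, fun v hv => absurd hv (by simp), fun v => (this.false v).elim⟩
  | succ n ih =>
    intro V _ G _ hcard hac
    classical
    rcases isEmpty_or_nonempty V with hV | hV
    · exact ⟨⊥, fun v hv => absurd hv (by simp), fun v => (hV.false v).elim⟩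
    obtain ⟨l, hl⟩ := aux_exists_low_degree G hac
    set s : Set V := {v | v ≠ l} with hs
    set G' : SimpleGraph s := G.induce s with hG'
    letI : DecidableRel G'.Adj := fun a b => ‹DecidableRel G.Adj› a b
    let f : G' ↪g G := SimpleGraph.Embedding.induce s
    have hcard' : Fintype.card s ≤ n := by
      have h1 := Fintype.card_subtype_lt (p := fun v => v ≠ l) (x := l) (by simp)
      have h0 : Fintype.card s = Fintype.card {x : V // x ≠ l} :=
        Fintype.card_congr (Equiv.refl _)
      omega
    have hac' : G'.IsAcyclic := by
      intro v c hc
      exact hac (c.map f.toHom) (hc.map f.injective)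
    obtain ⟨M', hM', hcov'⟩ := ih s G' hcard' hac'
    -- adjacency transfer
    have hadj' : ∀ (a b : s), G'.Adj a b ↔ G.Adj a b := by
      intro a b; rfl
    -- degree transfer for vertices not adjacent to l
    have hdeg' : ∀ (w : V) (hw : w ∈ s), ¬ G.Adj w l → 2 ≤ G.degree w →
        2 ≤ G'.degree ⟨w, hw⟩ := by
      intro w hw hnadj h2
      have hinj : Function.Injective
          (fun x : G.neighborSet w => (⟨⟨x.1, fun hxl => hnadj (hxl ▸ x.2)⟩,
            x.2⟩ : G'.neighborSet ⟨w, hw⟩)) := by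
        intro a b hab
        apply Subtype.ext
        exact congrArg (fun y : G'.neighborSet ⟨w, hw⟩ => ((y : s) : V)) hab
      have hle := Fintype.card_le_of_injective _ hinj
      have e1 : G.degree w = Fintype.card (G.neighborSet w) :=
        (SimpleGraph.card_neighborSet_eq_degree ..).symm
      have e2 : G'.degree ⟨w, hw⟩ = Fintype.card (G'.neighborSet ⟨w, hw⟩) :=
        (SimpleGraph.card_neighborSet_eq_degree ..).symm
      have e3 : Fintype.card (G.neighborSet w) = Fintype.card {x : V // x ∈ G.neighborSet w} :=
        Fintype.card_congr (Equiv.refl _)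
      have e4 : Fintype.card (G'.neighborSet ⟨w, hw⟩)
          = Fintype.card {x : s // x ∈ G'.neighborSet ⟨w, hw⟩} :=
        Fintype.card_congr (Equiv.refl _)
      omega
    -- the mapped matching
    have hMmap : (M'.map f.toHom).IsMatching := hM'.map f.toHom f.injective
    have hverts : (M'.map f.toHom).verts = Subtype.val '' M'.verts := rfl
    have hmemmap : ∀ (x : s), x ∈ M'.verts → (x : V) ∈ (M'.map f.toHom).verts := by
      intro x hx; exact ⟨x, hx, rfl⟩
    have hlnot : l ∉ (M'.map f.toHom).verts := by
      rintro ⟨x, hx, hxl⟩; exact x.2 hxl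
    -- unique neighbor of l
    have huniq : ∀ a b : V, G.Adj l a → G.Adj l b → a = b := by
      intro a b ha hb
      have ha' : a ∈ G.neighborFinset l := (SimpleGraph.mem_neighborFinset ..).mpr ha
      have hb' : b ∈ G.neighborFinset l := (SimpleGraph.mem_neighborFinset ..).mpr hb
      have : (G.neighborFinset l).card ≤ 1 := hl
      exact Finset.card_le_one.mp this a ha' b hb'
    by_cases hEx : ∃ w : s, G.Adj l w ∧ w ∉ M'.verts
    · obtain ⟨w, hadj, hwout⟩ := hEx
      set M : G.Subgraph := (M'.map f.toHom) ⊔ G.subgraphOfAdj hadj with hM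
      have hdisj : Disjoint (M'.map f.toHom).support (G.subgraphOfAdj hadj).support := by
        rw [hMmap.support_eq_verts, (Subgraph.IsMatching.subgraphOfAdj hadj).support_eq_verts]
        rw [Set.disjoint_right]
        intro x hx
        simp only [SimpleGraph.subgraphOfAdj_verts, Set.mem_insert_iff,
          Set.mem_singleton_iff] at hx
        rcases hx with rfl | rfl
        · exact hlnot
        · rintro ⟨y, hy, hyw⟩
          have : y = w := Subtype.ext hyw
          exact hwout (this ▸ hy)
      refine ⟨M, Subgraph.IsMatching.sup hMmap (Subgraph.IsMatching.subgraphOfAdj hadj) hdisj,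
        ?_⟩
      intro v h2
      have hvl : v ≠ l := fun hvl => by
        have : G.degree v ≤ 1 := hvl ▸ hl
        omega
      by_cases hvadj : G.Adj v l
      · have : v = (w : V) := huniq v w hvadj.symm hadj
        subst this
        simp [hM]
      · have := hcov' ⟨v, hvl⟩ (hdeg' v hvl hvadj h2)
        exact Set.mem_union_left _ (hmemmap _ this)
    · push_neg at hEx
      refine ⟨M'.map f.toHom, hMmap, ?_⟩
      intro v h2
      have hvl : v ≠ l := fun hvl => by
        have : G.degree v ≤ 1 := hvl ▸ hl
        omega
      by_cases hvadj : G.Adj v l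
      · exact hmemmap ⟨v, hvl⟩ (hEx ⟨v, hvl⟩ hvadj.symm)
      · exact hmemmap _ (hcov' ⟨v, hvl⟩ (hdeg' v hvl hvadj h2))


lemma aux_verts_card_le {V : Type*} [Fintype V] {G : SimpleGraph V} {M : G.Subgraph}
    (hM : M.IsMatching) : M.verts.ncard ≤ 2 * M.edgeSet.ncard := by
  classical
  have hVfin : M.verts.Finite := Set.toFinite _
  have hEfin : M.edgeSet.Finite := Set.toFinite _
  rw [Set.ncard_eq_toFinset_card' M.verts, Set.ncard_eq_toFinset_card' M.edgeSet]
  set f : V → Sym2 V := fun v =>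
    if h : v ∈ M.verts then (hM.toEdge ⟨v, h⟩ : Sym2 V) else s(v, v) with hf
  have hkey : ∀ v (hv : v ∈ M.verts), f v ∈ M.edgeSet ∧ v ∈ f v := by
    intro v hv
    obtain ⟨w, hw, -⟩ := hM hv
    have := hM.toEdge_eq_of_adj hw
    constructor
    · simp only [hf, dif_pos hv]
      exact (hM.toEdge ⟨v, hv⟩).2
    · simp only [hf, dif_pos hv, this]
      exact Sym2.mem_mk_left v w
  apply Finset.card_le_mul_card_image_of_maps_to (f := f)
  · intro v hv
    rw [Set.mem_toFinset] at hv
    rw [Set.mem_toFinset]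
    exact (hkey v hv).1
  · intro e he
    induction e with
    | h x y =>
      refine le_trans (Finset.card_le_card (fun v hv => ?_))
        ((Finset.card_insert_le x {y}).trans (by simp))
      rw [Finset.mem_filter, Set.mem_toFinset] at hv
      obtain ⟨hv1, hv2⟩ := hv
      have := (hkey v hv1).2
      rw [hv2, Sym2.mem_iff] at this
      rcases this with rfl | rfl
      · exact Finset.mem_insert_self _ _
      · exact Finset.mem_insert_of_mem (Finset.mem_singleton_self _)


/-- In any tree, the number of non-leaf vertices is at most twice the size of a
maximum matching. -/
theorem tree_nonleaf_le_two_matching {V : Type*} [Fintype V] (G : SimpleGraph V)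
    [DecidableRel G.Adj] (htree : G.IsTree) :
    ∃ M : G.Subgraph, M.IsMatching ∧
      ({v : V | 2 ≤ G.degree v} : Set V).ncard ≤ 2 * M.edgeSet.ncard := by
  obtain ⟨M, hM, hcov⟩ := aux_matching_cover (Fintype.card V) V G le_rfl htree.IsAcyclic
  refine ⟨M, hM, ?_⟩
  calc ({v : V | 2 ≤ G.degree v} : Set V).ncard
      ≤ M.verts.ncard := Set.ncard_le_ncard (fun v hv => hcov v hv) (Set.toFinite _)
    _ ≤ 2 * M.edgeSet.ncard := aux_verts_card_le hM
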